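/- Let p be a prime and m, n positive integers with d = gcd(m,n). Then gcd(p^m + 1, p^n - 1) equals 1 if n/d is odd and p is even; equals 2 if n/d is odd and p is odd; and equals p^d + 1 if n/d is even. -/

import Mathlib

lemma keyA (p m n G : ℕ) (hp : 2 ≤ p) (h1 : G ∣ p ^ m + 1) (h2 : G ∣ p ^ n - 1) :
    G ∣ p ^ (Nat.gcd (2 * m) n) - 1 := by
  have hple : 1 ≤ p ^ n := Nat.one_le_pow _ _ (by omega)
  have hplek : 1 ≤ p ^ (Nat.gcd (2 * m) n) := Nat.one_le_pow _ _ (by omega)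
  have hG : G ≠ 0 := by
    rintro rfl
    exact absurd (Nat.eq_zero_of_zero_dvd h1) (by positivity)
  haveI : NeZero G := ⟨hG⟩
  have hpm : ((p : ZMod G)) ^ m = -1 := by
    have h := (ZMod.natCast_eq_zero_iff _ _).mpr h1
    push_cast at h
    linear_combination h
  have hpn : ((p : ZMod G)) ^ n = 1 := by
    have h := (ZMod.natCast_eq_zero_iff _ _).mpr h2
    rw [Nat.cast_sub hple] at h
    push_cast at h
    linear_combination h
  have h2m : ((p : ZMod G)) ^ (2 * m) = 1 := by
    rw [two_mul, pow_add, hpm]; ring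
  have hk : ((p : ZMod G)) ^ (Nat.gcd (2 * m) n) = 1 :=
    orderOf_dvd_iff_pow_eq_one.mp
      (Nat.dvd_gcd (orderOf_dvd_of_pow_eq_one h2m) (orderOf_dvd_of_pow_eq_one hpn))
  rw [← ZMod.natCast_eq_zero_iff, Nat.cast_sub hplek]
  push_cast
  rw [hk]; ring

lemma keyB (q a : ℕ) (hq : Odd q) (ha : Odd a) : ¬ (2 * (q + 1) ∣ q ^ a + 1) := by
  intro hdvd
  -- work in ℤ
  set T : ℤ := ∑ i ∈ Finset.range a, (q : ℤ) ^ i * (-1 : ℤ) ^ (a - 1 - i) with hT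
  have hfac : T * ((q : ℤ) + 1) = (q : ℤ) ^ a + 1 := by
    have := geom_sum₂_mul (q : ℤ) (-1) a
    rw [ha.neg_one_pow] at this
    rw [hT]
    linear_combination this
  have hdvdZ : (2 * ((q : ℤ) + 1)) ∣ ((q : ℤ) ^ a + 1) := by
    exact_mod_cast Int.natCast_dvd_natCast.mpr hdvd
  rw [← hfac] at hdvdZ
  have hq1 : (q : ℤ) + 1 ≠ 0 := by positivity
  have h2T : (2 : ℤ) ∣ T := by
    rcases hdvdZ with ⟨c, hc⟩
    refine ⟨c, ?_⟩
    have : ((q : ℤ) + 1) * T = ((q : ℤ) + 1) * (2 * c) := by ring_nf; ring_nf at hc; linarith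
    exact mul_left_cancel₀ hq1 this
  -- but T is odd
  have hTodd : ((T : ZMod 2)) = 1 := by
    rw [hT]
    push_cast
    have hq2 : ((q : ℕ) : ZMod 2) = 1 := by
      rw [← ZMod.natCast_mod, Nat.odd_iff.mp hq, Nat.cast_one]
    have : ∀ i ∈ Finset.range a, ((q : ℕ) : ZMod 2) ^ i * (-1 : ZMod 2) ^ (a - 1 - i) = 1 := by
      intro i _
      rw [hq2]
      simp [CharTwo.neg_eq]
    rw [Finset.sum_congr rfl this]
    simp
    rw [← ZMod.natCast_mod, Nat.odd_iff.mp ha, Nat.cast_one]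
  have : ((T : ZMod 2)) = 0 := by
    exact_mod_cast (ZMod.intCast_zmod_eq_zero_iff_dvd T 2).mpr (by exact_mod_cast h2T)
  rw [hTodd] at this
  exact one_ne_zero this

theorem stmt1 (p m n d : ℕ) (hp : p.Prime) (hm : 0 < m) (hn : 0 < n)
    (hd : d = Nat.gcd m n) :
    (Odd (n / d) → p = 2 → Nat.gcd (p ^ m + 1) (p ^ n - 1) = 1) ∧
    (Odd (n / d) → p ≠ 2 → Nat.gcd (p ^ m + 1) (p ^ n - 1) = 2) ∧
    (Even (n / d) → Nat.gcd (p ^ m + 1) (p ^ n - 1) = p ^ d + 1) := by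
  have hp2 : 2 ≤ p := hp.two_le
  have hdpos : 0 < d := hd ▸ Nat.gcd_pos_of_pos_left n hm
  have hdm : d ∣ m := hd ▸ Nat.gcd_dvd_left m n
  have hdn : d ∣ n := hd ▸ Nat.gcd_dvd_right m n
  obtain ⟨a, rfl⟩ := hdm
  obtain ⟨b, rfl⟩ := hdn
  have hbq : d * b / d = b := Nat.mul_div_cancel_left b hdpos
  rw [hbq]
  have hab : Nat.Coprime a b := by
    have h := hd
    rw [Nat.gcd_mul_left] at h
    have h1 : d * 1 = d * Nat.gcd a b := by rw [mul_one]; exact h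
    exact (Nat.mul_left_cancel hdpos h1).symm
  set G := Nat.gcd (p ^ (d * a) + 1) (p ^ (d * b) - 1) with hGdef
  have hG1 : G ∣ p ^ (d * a) + 1 := Nat.gcd_dvd_left _ _
  have hG2 : G ∣ p ^ (d * b) - 1 := Nat.gcd_dvd_right _ _
  have hkey := keyA p (d * a) (d * b) G hp2 hG1 hG2
  have h1m : 1 ≤ p ^ (d * a) := Nat.one_le_pow _ _ (by omega)
  have h1d : 1 ≤ p ^ d := Nat.one_le_pow _ _ (by omega)
  have hapos : 0 < a := Nat.pos_of_ne_zero (by rintro rfl; simp at hm)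
  have hdane : d * a ≠ 0 := (Nat.mul_pos hdpos hapos).ne'
  refine ⟨?_, ?_, ?_⟩
  · intro hoddb hpeq
    have hgcd : Nat.gcd (2 * (d * a)) (d * b) = d := by
      rw [show 2 * (d * a) = d * (2 * a) by ring, Nat.gcd_mul_left,
        Nat.Coprime.gcd_eq_one ((Nat.coprime_two_left.mpr hoddb).mul hab), mul_one]
    rw [hgcd] at hkey
    have hGm1 : G ∣ p ^ (d * a) - 1 := hkey.trans (Nat.pow_sub_one_dvd_pow_sub_one p (Dvd.intro a rfl : d ∣ d * a))
    have hGtwo : G ∣ 2 := by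
      have h := Nat.dvd_sub hG1 hGm1
      rwa [show p ^ (d * a) + 1 - (p ^ (d * a) - 1) = 2 by omega] at h
    have hGodd : ¬ (2 ∣ G) := by
      intro h2
      have h2' : (2 : ℕ) ∣ p ^ (d * a) + 1 := h2.trans hG1
      have h2'' : (2 : ℕ) ∣ p ^ (d * a) := by
        rw [hpeq]; exact dvd_pow_self 2 hdane
      omega
    rcases (Nat.dvd_prime Nat.prime_two).mp hGtwo with h | h
    · exact h
    · exact absurd (h ▸ dvd_refl G) hGodd
  · intro hoddb hpne
    have hpodd : Odd p := hp.odd_of_ne_two hpne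
    have hgcd : Nat.gcd (2 * (d * a)) (d * b) = d := by
      rw [show 2 * (d * a) = d * (2 * a) by ring, Nat.gcd_mul_left,
        Nat.Coprime.gcd_eq_one ((Nat.coprime_two_left.mpr hoddb).mul hab), mul_one]
    rw [hgcd] at hkey
    have hGm1 : G ∣ p ^ (d * a) - 1 := hkey.trans (Nat.pow_sub_one_dvd_pow_sub_one p (Dvd.intro a rfl : d ∣ d * a))
    have hGtwo : G ∣ 2 := by
      have h := Nat.dvd_sub hG1 hGm1
      rwa [show p ^ (d * a) + 1 - (p ^ (d * a) - 1) = 2 by omega] at h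
    have hma : p ^ (d * a) % 2 = 1 := Nat.odd_iff.mp (hpodd.pow)
    have hnb : p ^ (d * b) % 2 = 1 := Nat.odd_iff.mp (hpodd.pow)
    have h2G : 2 ∣ G := Nat.dvd_gcd (by omega) (by omega)
    exact Nat.dvd_antisymm hGtwo h2G
  · intro hevenb
    have ha_odd : Odd a := by
      rcases Nat.even_or_odd a with h | h
      · exfalso
        have h2 : (2 : ℕ) ∣ Nat.gcd a b := Nat.dvd_gcd h.two_dvd hevenb.two_dvd
        rw [hab] at h2
        omega
      · exact h
    have hgcd : Nat.gcd (2 * (d * a)) (d * b) = d * 2 := by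
      rw [show 2 * (d * a) = d * (2 * a) by ring, Nat.gcd_mul_left]
      congr 1
      apply Nat.dvd_antisymm
      · have h1 : Nat.gcd (2 * a) b ∣ Nat.gcd (2 * a) (2 * b) :=
          Nat.dvd_gcd (Nat.gcd_dvd_left _ _) ((Nat.gcd_dvd_right _ _).trans ⟨2, by ring⟩)
        rwa [Nat.gcd_mul_left, Nat.Coprime.gcd_eq_one hab, mul_one] at h1
      · exact Nat.dvd_gcd ⟨a, rfl⟩ hevenb.two_dvd
    rw [hgcd, pow_mul] at hkey
    -- hkey : G ∣ (p ^ d) ^ 2 - 1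
    have hfac : (p ^ d) ^ 2 - 1 = (p ^ d + 1) * (p ^ d - 1) := by
      have h := Nat.sq_sub_sq (p ^ d) 1
      simpa using h
    have hdvd1 : p ^ d + 1 ∣ p ^ (d * a) + 1 := by
      rw [pow_mul]
      simpa using Odd.nat_add_dvd_pow_add_pow (p ^ d) 1 ha_odd
    have hdvd2 : p ^ d + 1 ∣ p ^ (d * b) - 1 := by
      have hb2 : d * b = d * 2 * (b / 2) := by
        obtain ⟨c, rfl⟩ := hevenb
        have hcc : (c + c) / 2 = c := by omega
        rw [hcc]; ring
      have h := Nat.pow_sub_one_dvd_pow_sub_one p (Dvd.intro (b / 2) rfl : d * 2 ∣ d * 2 * (b / 2))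
      rw [← hb2, pow_mul] at h
      exact (hfac ▸ Dvd.intro _ rfl).trans h
    have hq1G : p ^ d + 1 ∣ G := Nat.dvd_gcd hdvd1 hdvd2
    obtain ⟨t, htG⟩ := hq1G
    have ht_dvd : t ∣ p ^ d - 1 := by
      have h : (p ^ d + 1) * t ∣ (p ^ d + 1) * (p ^ d - 1) := by
        rw [← htG, ← hfac]; exact hkey
      exact (Nat.mul_dvd_mul_iff_left (show 0 < p ^ d + 1 by omega)).mp h
    have htG' : t ∣ G := ⟨p ^ d + 1, by rw [htG]; ring⟩
    have ht_m : t ∣ p ^ (d * a) + 1 := htG'.trans hG1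
    have ht_m1 : t ∣ p ^ (d * a) - 1 :=
      ht_dvd.trans (Nat.pow_sub_one_dvd_pow_sub_one p (Dvd.intro a rfl : d ∣ d * a))
    have ht2 : t ∣ 2 := by
      have h := Nat.dvd_sub ht_m ht_m1
      rwa [show p ^ (d * a) + 1 - (p ^ (d * a) - 1) = 2 by omega] at h
    rcases (Nat.dvd_prime Nat.prime_two).mp ht2 with rfl | rfl
    · rw [htG, mul_one]
    · exfalso
      rcases hp.eq_two_or_odd' with rfl | hpodd
      · have h2G : 2 ∣ G := ⟨2 ^ d + 1, by rw [htG]; ring⟩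
        have h2' : (2 : ℕ) ∣ 2 ^ (d * a) + 1 := h2G.trans hG1
        have h2'' : (2 : ℕ) ∣ 2 ^ (d * a) := dvd_pow_self 2 hdane
        omega
      · apply keyB (p ^ d) a (hpodd.pow) ha_odd
        have hGq : G ∣ (p ^ d) ^ a + 1 := by rw [← pow_mul]; exact hG1
        exact (show 2 * (p ^ d + 1) ∣ G from ⟨1, by rw [htG]; ring⟩).trans hGq
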